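/- Let q, m, n be integers with n > m such that one of the following holds: (a) q = 2 and m = 3; (b) q = 3 and m = 2; (c) q ≥ 4 and m = 1. Then Σ_{k=m}^{n−1} q^{2(n−k)} · ([n choose k]_q)^2 · (q^k)! · (q^n − q^k)! < (q^n)! . -/
import Mathlib

/-- The Gaussian (`q`-)binomial coefficient
`[n choose k]_q = ((qⁿ−1)(qⁿ⁻¹−1)⋯(qⁿ⁻ᵏ⁺¹−1)) / ((qᵏ−1)(qᵏ⁻¹−1)⋯(q−1))`, as a rational. -/
noncomputable def gaussBinomial (q n k : ℕ) : ℚ :=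
  (∏ i ∈ Finset.range k, ((q : ℚ) ^ (n - i) - 1)) /
    (∏ i ∈ Finset.range k, ((q : ℚ) ^ (i + 1) - 1))

open Finset


lemma prod_range_sub_eq_factorial (r : ℕ) : ∏ i ∈ range r, (r - i) = Nat.factorial r := by
  rw [← Finset.prod_range_reflect]
  rw [← Finset.prod_range_add_one_eq_factorial]
  apply Finset.prod_congr rfl
  intro i hi; rw [mem_range] at hi; omega

/-- refined choose lower bound -/
lemma chooseLB2 (q n k : ℕ) (hq : 1 ≤ q) (hkn : k ≤ n) :
    q ^ ((n - k) * (q ^ k - 1)) * (q ^ n - q ^ k + 1) ≤ (q ^ n).choose (q ^ k) := by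
  set d := n - k with hd
  set r := q ^ k with hrdef
  set N := q ^ n with hNdef
  have hN : N = q ^ d * r := by
    rw [hNdef, hrdef, ← pow_add]; congr 1; omega
  have hr1 : 1 ≤ r := Nat.one_le_pow _ _ hq
  have hqd : 1 ≤ q ^ d := Nat.one_le_pow _ _ hq
  have hrN : r ≤ N := by
    calc r = 1 * r := (one_mul r).symm
    _ ≤ q ^ d * r := Nat.mul_le_mul_right _ hqd
    _ = N := hN.symm
  have hdesc : N.descFactorial r = ∏ i ∈ range r, (N - i) :=
    Nat.descFactorial_eq_prod_range N r
  have hterm : ∀ i ∈ range (r - 1), q ^ d * (r - i) ≤ N - i := by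
    intro i hi
    rw [mem_range] at hi
    have h1 : q ^ d * (r - i) + q ^ d * i = q ^ d * r := by rw [← Nat.mul_add]; congr 1; omega
    have h2 : i ≤ q ^ d * i := Nat.le_mul_of_pos_left _ hqd
    omega
  have hsplit : ∏ i ∈ range r, (N - i) = (∏ i ∈ range (r - 1), (N - i)) * (N - (r - 1)) := by
    have : r = (r - 1) + 1 := by omega
    rw [this, Finset.prod_range_succ]
    congr 2 <;> omega
  have hfac : ∏ i ∈ range (r - 1), (r - i) = Nat.factorial r := by
    have : ∏ i ∈ range r, (r - i) = (∏ i ∈ range (r - 1), (r - i)) * (r - (r - 1)) := by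
      have h : r = (r - 1) + 1 := by omega
      nth_rewrite 1 [h]
      rw [Finset.prod_range_succ]
    have h2 := prod_range_sub_eq_factorial r
    rw [this] at h2
    have : r - (r - 1) = 1 := by omega
    rw [this, mul_one] at h2
    exact h2
  have hprod1 : q ^ (d * (r - 1)) * r.factorial * (N - r + 1) ≤ N.descFactorial r := by
    rw [hdesc, hsplit]
    have h1 : ∏ i ∈ range (r - 1), (q ^ d * (r - i)) ≤ ∏ i ∈ range (r - 1), (N - i) :=
      Finset.prod_le_prod (fun i _ => Nat.zero_le _) hterm
    have h2 : ∏ i ∈ range (r - 1), (q ^ d * (r - i)) = q ^ (d * (r - 1)) * r.factorial := by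
      rw [Finset.prod_mul_distrib, Finset.prod_const, Finset.card_range, ← pow_mul, hfac]
    have h3 : N - r + 1 = N - (r - 1) := by omega
    rw [← h2, ← h3]
    exact Nat.mul_le_mul_right _ h1
  have hchoose : N.descFactorial r = r.factorial * N.choose r := Nat.descFactorial_eq_factorial_mul_choose N r
  have hfacpos : 0 < r.factorial := Nat.factorial_pos r
  have hfin : r.factorial * (q ^ (d * (r - 1)) * (N - r + 1)) ≤ r.factorial * N.choose r := by
    calc r.factorial * (q ^ (d * (r - 1)) * (N - r + 1))
        = q ^ (d * (r - 1)) * r.factorial * (N - r + 1) := by ring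
      _ ≤ N.descFactorial r := hprod1
      _ = r.factorial * N.choose r := hchoose
  exact Nat.le_of_mul_le_mul_left hfin hfacpos


/-- generic choose lower bound: C(q^n, q^k) ≥ q^{(n-k) q^k} -/
lemma chooseLB (q n k : ℕ) (hq : 1 ≤ q) (hkn : k ≤ n)
    (h2 : q ^ ((n - k) * (q ^ k - 1)) * (q ^ n - q ^ k + 1) ≤ (q ^ n).choose (q ^ k)) :
    q ^ ((n - k) * q ^ k) ≤ (q ^ n).choose (q ^ k) := by
  set d := n - k
  set r := q ^ k with hrdef
  set N := q ^ n with hNdef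
  have hN : N = q ^ d * r := by rw [hNdef, hrdef, ← pow_add]; congr 1; omega
  have hr1 : 1 ≤ r := Nat.one_le_pow _ _ hq
  have hqd : 1 ≤ q ^ d := Nat.one_le_pow _ _ hq
  refine le_trans ?_ h2
  have h3 : q ^ (d * r) = q ^ (d * (r - 1)) * q ^ d := by rw [← pow_add]; congr 1
                                                          have : d * r = d * (r - 1 + 1) := by congr 1; omega
                                                          rw [this, Nat.mul_add, mul_one]
  rw [h3]
  apply Nat.mul_le_mul_left
  -- q^d ≤ N - r + 1  since N = q^d r ≥ q^d + r - 1
  have : q ^ d * 1 + 1 * r ≤ q ^ d * r + 1 := by nlinarith [hqd, hr1]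
  omega

/-- full-refinement bound: (N - r + 1)^r ≤ C(N,r) * r! -/
lemma chooseLB3 (N r : ℕ) (hrN : r ≤ N) :
    (N - r + 1) ^ r ≤ N.choose r * r.factorial := by
  have hdesc : N.descFactorial r = ∏ i ∈ range r, (N - i) :=
    Nat.descFactorial_eq_prod_range N r
  have h1 : (N - r + 1) ^ r ≤ ∏ i ∈ range r, (N - i) := by
    calc (N - r + 1) ^ r = ∏ _i ∈ range r, (N - r + 1) := by
          rw [Finset.prod_const, Finset.card_range]
      _ ≤ ∏ i ∈ range r, (N - i) := by
          apply Finset.prod_le_prod (fun i _ => Nat.zero_le _)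
          intro i hi; rw [mem_range] at hi; omega
  calc (N - r + 1) ^ r ≤ N.descFactorial r := by rw [hdesc]; exact h1
    _ = r.factorial * N.choose r := Nat.descFactorial_eq_factorial_mul_choose N r
    _ = N.choose r * r.factorial := by ring


lemma den_pos (q : ℕ) (hq : 2 ≤ q) (k : ℕ) :
    0 < ∏ i ∈ range k, ((q:ℚ)^(i+1) - 1) := by
  apply Finset.prod_pos
  intro i _
  have hq2 : (2:ℚ) ≤ (q:ℚ) := by exact_mod_cast hq
  have : (1:ℚ) < (q:ℚ)^(i+1) := one_lt_pow₀ (by linarith) (by omega)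
  linarith

lemma den_lb_ge3 (q : ℕ) (hq : 3 ≤ q) (k : ℕ) :
    (((q:ℚ)-2) * (q:ℚ)^k + 1) * ∏ i ∈ range k, (q:ℚ)^(i+1)
      ≤ ((q:ℚ)-1) * (q:ℚ)^k * ∏ i ∈ range k, ((q:ℚ)^(i+1) - 1) := by
  have hq3 : (3:ℚ) ≤ (q:ℚ) := by exact_mod_cast hq
  induction k with
  | zero => simp; linarith
  | succ k ih =>
    have hP : (0:ℚ) < ∏ i ∈ range k, (q:ℚ)^(i+1) := by positivity
    have hS : (0:ℚ) < ∏ i ∈ range k, ((q:ℚ)^(i+1) - 1) := den_pos q (by omega) k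
    have hx : (1:ℚ) ≤ (q:ℚ)^k := one_le_pow₀ (by linarith)
    rw [Finset.prod_range_succ, Finset.prod_range_succ]
    set x := (q:ℚ)^k with hxdef
    set P := ∏ i ∈ range k, (q:ℚ)^(i+1) with hPdef
    set S := ∏ i ∈ range k, ((q:ℚ)^(i+1) - 1) with hSdef
    have hpow : (q:ℚ)^(k+1) = (q:ℚ) * x := by rw [hxdef, pow_succ]; ring
    rw [hpow]
    have hqx : (3:ℚ) ≤ (q:ℚ) * x := by nlinarith
    have key : (0:ℚ) < (q:ℚ)*((q:ℚ)*x-1) := by nlinarith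
    -- goal: ((q-2)(qx)+1) * (P * (qx)) ≤ (q-1)(qx) * (S * (qx - 1))
    nlinarith [mul_le_mul_of_nonneg_left ih (le_of_lt key),
      hP, hS, hx, hq3,
      mul_nonneg (le_of_lt hP) (by linarith : (0:ℚ) ≤ x - 1)]

lemma den_lb_ge3' (q : ℕ) (hq : 3 ≤ q) (k : ℕ) (a : ℚ) (ha0 : 0 ≤ a)
    (ha : a * ((q:ℚ)-1) ≤ (q:ℚ)-2) :
    a * ∏ i ∈ range k, (q:ℚ)^(i+1) ≤ ∏ i ∈ range k, ((q:ℚ)^(i+1) - 1) := by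
  have hq3 : (3:ℚ) ≤ (q:ℚ) := by exact_mod_cast hq
  have hx : (1:ℚ) ≤ (q:ℚ)^k := one_le_pow₀ (by linarith)
  have hP : (0:ℚ) < ∏ i ∈ range k, (q:ℚ)^(i+1) := by positivity
  have h := den_lb_ge3 q hq k
  set x := (q:ℚ)^k
  set P := ∏ i ∈ range k, (q:ℚ)^(i+1)
  set S := ∏ i ∈ range k, ((q:ℚ)^(i+1) - 1)
  -- ((q-2)x+1) P ≤ (q-1) x S  and  a(q-1) ≤ q-2
  have h1 : a * ((q:ℚ)-1) * x * P ≤ ((q:ℚ)-2) * x * P := by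
    apply mul_le_mul_of_nonneg_right _ (le_of_lt hP)
    apply mul_le_mul_of_nonneg_right ha (by linarith)
  have h2 : ((q:ℚ)-2) * x * P ≤ ((q:ℚ)-1) * x * S := by nlinarith
  have h3 : a * ((q:ℚ)-1) * x * P ≤ ((q:ℚ)-1) * x * S := le_trans h1 h2
  have hpos : (0:ℚ) < ((q:ℚ)-1) * x := by nlinarith
  nlinarith [mul_pos hpos hP]

lemma den_lb_2 (k : ℕ) :
    ((2:ℚ)^k + 2) * ∏ i ∈ range k, (2:ℚ)^(i+1)
      ≤ 4 * (2:ℚ)^k * ∏ i ∈ range k, ((2:ℚ)^(i+1) - 1) := by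
  induction k with
  | zero => norm_num
  | succ k ih =>
    rcases Nat.eq_zero_or_pos k with hk0 | hk1
    · subst hk0; simp [Finset.prod_range_succ]; norm_num
    · have hP : (0:ℚ) < ∏ i ∈ range k, (2:ℚ)^(i+1) := by positivity
      have hS : (0:ℚ) < ∏ i ∈ range k, ((2:ℚ)^(i+1) - 1) := den_pos 2 (by norm_num) k
      have hx : (2:ℚ) ≤ (2:ℚ)^k := by
        calc (2:ℚ) = 2^1 := by norm_num
        _ ≤ 2^k := pow_le_pow_right₀ (by norm_num) hk1
      rw [Finset.prod_range_succ, Finset.prod_range_succ]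
      set x := (2:ℚ)^k with hxdef
      set P := ∏ i ∈ range k, (2:ℚ)^(i+1) with hPdef
      set S := ∏ i ∈ range k, ((2:ℚ)^(i+1) - 1) with hSdef
      have hpow : (2:ℚ)^(k+1) = 2 * x := by rw [hxdef, pow_succ]; ring
      rw [hpow]
      -- goal: (2x+2) * (P * 2x) ≤ 4·(2x) * (S * (2x-1))
      nlinarith [mul_le_mul_of_nonneg_left ih (by linarith : (0:ℚ) ≤ 2*(2*x-1)),
        mul_nonneg (le_of_lt hP) (by linarith : (0:ℚ) ≤ x - 2), hP, hS]

lemma den_lb_2' (k : ℕ) :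
    (1/4 : ℚ) * ∏ i ∈ range k, (2:ℚ)^(i+1) ≤ ∏ i ∈ range k, ((2:ℚ)^(i+1) - 1) := by
  have h := den_lb_2 k
  have hx : (1:ℚ) ≤ (2:ℚ)^k := one_le_pow₀ (by norm_num)
  have hP : (0:ℚ) < ∏ i ∈ range k, (2:ℚ)^(i+1) := by positivity
  set x := (2:ℚ)^k
  set P := ∏ i ∈ range k, (2:ℚ)^(i+1)
  set S := ∏ i ∈ range k, ((2:ℚ)^(i+1) - 1)
  nlinarith [hP, hx, h]

lemma key_generic (q n k : ℕ) (hq : 2 ≤ q) (hk : 1 ≤ k) (hkn : k < n) (a c : ℚ)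
    (ha : 0 < a)
    (haS : a * ∏ i ∈ range k, (q:ℚ)^(i+1) ≤ ∏ i ∈ range k, ((q:ℚ)^(i+1) - 1))
    (hr : 2*k+2 ≤ q^k)
    (hc : 1 ≤ c * a^2 * (q:ℚ)^((n-k)*(q^k - (2*k+2)))) :
    (q:ℚ)^(2*(n-k)) * (gaussBinomial q n k)^2 ≤ c * (((q^n).choose (q^k) : ℕ) : ℚ) := by
  have hQ1 : (1:ℚ) ≤ (q:ℚ) := by exact_mod_cast Nat.one_le_of_lt hq
  have hQ0 : (0:ℚ) < (q:ℚ) := by linarith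
  set SN := ∑ i ∈ range k, (n - i) with hSNdef
  set SD := ∑ i ∈ range k, (i + 1) with hSDdef
  have hSum : SN + SD = k * (n + 1) := by
    rw [hSNdef, hSDdef, ← Finset.sum_add_distrib]
    rw [Finset.sum_congr rfl (fun i hi => (by rw [mem_range] at hi; omega : n - i + (i+1) = n+1))]
    rw [Finset.sum_const, Finset.card_range, smul_eq_mul]
  have hSD2 : 2 * SD = k * (k + 1) := by
    have h1 : SD = (∑ i ∈ range k, i) + k := by
      rw [hSDdef, Finset.sum_add_distrib, Finset.sum_const, Finset.card_range, smul_eq_mul, mul_one]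
    have h2 : (∑ i ∈ range k, i) * 2 = k * (k - 1) := Finset.sum_range_id_mul_two k
    have h3 : k * (k + 1) = k * (k - 1) + 2 * k := by
      have : k - 1 + 2 = k + 1 := by omega
      rw [← this, Nat.mul_add]; ring
    omega
  -- exponent bookkeeping
  set E := (n - k) * (q ^ k - (2 * k + 2)) with hEdef
  set B := (n - k) * q ^ k with hBdef
  have hExp : B + 2 * SD = (2 * (n - k) + 2 * SN) + E := by
    have h1 : (SN:ℤ) + SD = k * (n+1) := by exact_mod_cast hSum
    have h2 : (2:ℤ) * SD = k * (k+1) := by exact_mod_cast hSD2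
    have hkn' : k ≤ n := le_of_lt hkn
    zify [hr, hkn', hEdef, hBdef]
    linear_combination (-2:ℤ) * h1 + 2 * h2
  set Num := ∏ i ∈ range k, ((q:ℚ)^(n-i) - 1) with hNumdef
  set Den := ∏ i ∈ range k, ((q:ℚ)^(i+1) - 1) with hDendef
  have hDen0 : 0 < Den := den_pos q hq k
  have hNum0 : 0 ≤ Num := by
    apply Finset.prod_nonneg
    intro i _
    have : (1:ℚ) ≤ (q:ℚ)^(n-i) := one_le_pow₀ hQ1
    linarith
  have hPN : ∏ i ∈ range k, (q:ℚ)^(n-i) = (q:ℚ)^SN := Finset.prod_pow_eq_pow_sum _ _ _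
  have hPD : ∏ i ∈ range k, (q:ℚ)^(i+1) = (q:ℚ)^SD := Finset.prod_pow_eq_pow_sum _ _ _
  have hNumPN : Num ≤ (q:ℚ)^SN := by
    rw [← hPN, hNumdef]
    apply Finset.prod_le_prod
    · intro i _
      have : (1:ℚ) ≤ (q:ℚ)^(n-i) := one_le_pow₀ hQ1
      linarith
    · intro i _; linarith
  have haS' : a * (q:ℚ)^SD ≤ Den := by rw [← hPD]; exact haS
  have hchoose : (q:ℚ)^B ≤ (((q^n).choose (q^k) : ℕ) : ℚ) := by
    have := chooseLB q n k (by omega) (le_of_lt hkn) (chooseLB2 q n k (by omega) (le_of_lt hkn))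
    have h' : ((q ^ ((n-k) * q^k) : ℕ) : ℚ) ≤ (((q^n).choose (q^k) : ℕ) : ℚ) := by exact_mod_cast this
    rw [hBdef]
    push_cast at h' ⊢
    exact h'
  have hC0 : (0:ℚ) < (((q^n).choose (q^k) : ℕ) : ℚ) := lt_of_lt_of_le (pow_pos hQ0 B) hchoose
  have hE0 : (0:ℚ) < (q:ℚ)^E := pow_pos hQ0 E
  have hc0 : 0 < c := by nlinarith [hc, mul_pos (pow_pos ha 2) hE0]
  -- main reduction
  rw [gaussBinomial, ← hNumdef, ← hDendef, div_pow, ← mul_div_assoc]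
  rw [div_le_iff₀ (by positivity)]
  calc (q:ℚ)^(2*(n-k)) * Num^2
      ≤ (q:ℚ)^(2*(n-k)) * ((q:ℚ)^SN)^2 := by
        apply mul_le_mul_of_nonneg_left _ (by positivity)
        exact pow_le_pow_left₀ hNum0 hNumPN 2
    _ = (q:ℚ)^(2*(n-k) + 2*SN) := by rw [← pow_mul, ← pow_add]; congr 1; ring
    _ ≤ (c * a^2 * (q:ℚ)^E) * (q:ℚ)^(2*(n-k) + 2*SN) := le_mul_of_one_le_left (by positivity) hc
    _ = c * ((q:ℚ)^B * (a * (q:ℚ)^SD)^2) := by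
        have hEB : E + (2*(n-k)+2*SN) = B + SD*2 := by omega
        have hpow2 : (q:ℚ)^E * (q:ℚ)^(2*(n-k)+2*SN) = (q:ℚ)^B * (q:ℚ)^(SD*2) := by
          rw [← pow_add, ← pow_add, hEB]
        calc (c * a^2 * (q:ℚ)^E) * (q:ℚ)^(2*(n-k)+2*SN)
            = c * a^2 * ((q:ℚ)^E * (q:ℚ)^(2*(n-k)+2*SN)) := by ring
          _ = c * a^2 * ((q:ℚ)^B * (q:ℚ)^(SD*2)) := by rw [hpow2]
          _ = c * ((q:ℚ)^B * (a * (q:ℚ)^SD)^2) := by rw [mul_pow, ← pow_mul]; ring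
    _ ≤ c * ((((q^n).choose (q^k) : ℕ) : ℚ) * Den^2) := by
        apply mul_le_mul_of_nonneg_left _ (le_of_lt hc0)
        apply mul_le_mul hchoose _ (by positivity) (le_of_lt hC0)
        exact pow_le_pow_left₀ (by positivity) haS' 2
    _ = c * (((q^n).choose (q^k) : ℕ) : ℚ) * Den^2 := by ring

/-- special term k = 1 for q ≥ 4 -/
lemma key_q4 (q n : ℕ) (hq : 4 ≤ q) (hn : 2 ≤ n) :
    (q:ℚ)^(2*(n-1)) * (gaussBinomial q n 1)^2
      ≤ (16/27) * (((q^n).choose (q^1) : ℕ) : ℚ) := by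
  have hQ4 : (4:ℚ) ≤ (q:ℚ) := by exact_mod_cast hq
  have hQ1 : (1:ℚ) ≤ (q:ℚ) := by linarith
  have hQ0 : (0:ℚ) < (q:ℚ) := by linarith
  have hqn : q ≤ q^n := Nat.le_self_pow (by omega) q
  -- cast of refined choose bound
  have hC : (q:ℚ)^((n-1)*(q-1)) * ((q:ℚ)^n - (q:ℚ) + 1) ≤ (((q^n).choose (q^1) : ℕ) : ℚ) := by
    have h := chooseLB2 q n 1 (by omega) (by omega)
    have h' : ((q ^ ((n-1) * (q^1 - 1)) * (q^n - q^1 + 1) : ℕ) : ℚ)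
        ≤ (((q^n).choose (q^1) : ℕ) : ℚ) := by exact_mod_cast h
    rw [Nat.cast_mul, Nat.cast_add, Nat.cast_sub (by simpa using hqn)] at h'
    simpa using h'
  have hC0 : (0:ℚ) < (((q^n).choose (q^1) : ℕ) : ℚ) := by
    have : 0 < (q^n).choose (q^1) := Nat.choose_pos (by simpa using hqn)
    exact_mod_cast this
  -- 3/4 bounds
  have hQn2 : (q:ℚ)^2 ≤ (q:ℚ)^n := pow_le_pow_right₀ hQ1 hn
  have h34 : (3/4)*(q:ℚ)^n ≤ (q:ℚ)^n - (q:ℚ) + 1 := by nlinarith [sq_nonneg ((q:ℚ) - 2)]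
  have hQ34 : (3/4)*(q:ℚ) ≤ (q:ℚ) - 1 := by linarith
  -- compute gaussBinomial
  have hG : gaussBinomial q n 1 = ((q:ℚ)^n - 1)/((q:ℚ) - 1) := by
    rw [gaussBinomial, Finset.prod_range_one, Finset.prod_range_one]
    norm_num
  rw [hG, div_pow, ← mul_div_assoc, div_le_iff₀ (by nlinarith : (0:ℚ) < ((q:ℚ)-1)^2)]
  have hexp : 2*(n-1) + 2*n + 1 ≤ (n-1)*(q-1) + n + 2 := by
    have : (n-1)*3 ≤ (n-1)*(q-1) := Nat.mul_le_mul_left _ (by omega)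
    omega
  have step1 : (q:ℚ)^(2*(n-1)) * ((q:ℚ)^n - 1)^2 ≤ (q:ℚ)^(2*(n-1) + 2*n) := by
    rw [pow_add]
    apply mul_le_mul_of_nonneg_left _ (by positivity)
    have h1 : ((q:ℚ)^n - 1)^2 ≤ ((q:ℚ)^n)^2 := by
      apply pow_le_pow_left₀ (by nlinarith [one_le_pow₀ hQ1 (M₀ := ℚ) (n := n)]) (by linarith) 2
    calc ((q:ℚ)^n - 1)^2 ≤ ((q:ℚ)^n)^2 := h1
      _ = (q:ℚ)^(2*n) := by rw [← pow_mul]; congr 1; ring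
  have step2 : 4 * (q:ℚ)^(2*(n-1)+2*n) ≤ (q:ℚ)^((n-1)*(q-1) + n + 2) := by
    calc 4 * (q:ℚ)^(2*(n-1)+2*n) ≤ (q:ℚ) * (q:ℚ)^(2*(n-1)+2*n) := by
          apply mul_le_mul_of_nonneg_right hQ4 (by positivity)
      _ = (q:ℚ)^(2*(n-1)+2*n+1) := by rw [pow_succ]; ring
      _ ≤ (q:ℚ)^((n-1)*(q-1)+n+2) := pow_le_pow_right₀ hQ1 hexp
  have step3 : (1/4) * (q:ℚ)^((n-1)*(q-1)+n+2)
      ≤ (16/27) * (((q^n).choose (q^1) : ℕ) : ℚ) * ((q:ℚ)-1)^2 := by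
    have hA : (q:ℚ)^((n-1)*(q-1)) * ((3/4)*(q:ℚ)^n) ≤ (((q^n).choose (q^1) : ℕ) : ℚ) := by
      calc (q:ℚ)^((n-1)*(q-1)) * ((3/4)*(q:ℚ)^n)
          ≤ (q:ℚ)^((n-1)*(q-1)) * ((q:ℚ)^n - (q:ℚ) + 1) :=
            mul_le_mul_of_nonneg_left h34 (by positivity)
        _ ≤ _ := hC
    have hB : ((3/4)*(q:ℚ))^2 ≤ ((q:ℚ)-1)^2 := pow_le_pow_left₀ (by positivity) hQ34 2
    calc (1/4) * (q:ℚ)^((n-1)*(q-1)+n+2)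
        = (16/27) * ((q:ℚ)^((n-1)*(q-1)) * ((3/4)*(q:ℚ)^n)) * ((3/4)*(q:ℚ))^2 := by
          rw [pow_add, pow_add]; ring
      _ ≤ (16/27) * (((q^n).choose (q^1) : ℕ) : ℚ) * ((q:ℚ)-1)^2 := by
          apply mul_le_mul (mul_le_mul_of_nonneg_left hA (by norm_num)) hB (by positivity)
          positivity
  calc (q:ℚ)^(2*(n-1)) * ((q:ℚ)^n - 1)^2 ≤ (q:ℚ)^(2*(n-1)+2*n) := step1
    _ ≤ (1/4) * (q:ℚ)^((n-1)*(q-1)+n+2) := by linarith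
    _ ≤ _ := step3

set_option maxHeartbeats 2000000 in
/-- special term k = 3 for q = 2, n ≥ 5 -/
lemma key_q2 (n : ℕ) (hn : 5 ≤ n) :
    ((2:ℕ):ℚ)^(2*(n-3)) * (gaussBinomial 2 n 3)^2
      ≤ (40320 * 2^28 / (441 * 25^8)) * (((2^n).choose (2^3) : ℕ) : ℚ) := by
  set u : ℚ := (2:ℚ)^(n-3) with hu
  have hu4 : (4:ℚ) ≤ u := by
    rw [hu]
    calc (4:ℚ) = 2^2 := by norm_num
      _ ≤ 2^(n-3) := pow_le_pow_right₀ (by norm_num) (by omega)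
  have hu0 : (0:ℚ) < u := by positivity
  have e1 : (2:ℚ)^(n-0) = u * 8 := by
    calc (2:ℚ)^(n-0) = 2^((n-3)+3) := by congr 1; omega
      _ = u * 8 := by rw [pow_add, hu]; norm_num
  have e2 : (2:ℚ)^(n-1) = u * 4 := by
    calc (2:ℚ)^(n-1) = 2^((n-3)+2) := by congr 1; omega
      _ = u * 4 := by rw [pow_add, hu]; norm_num
  have e3 : (2:ℚ)^(n-2) = u * 2 := by
    calc (2:ℚ)^(n-2) = 2^((n-3)+1) := by congr 1; omega
      _ = u * 2 := by rw [pow_add, hu]; norm_num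
  have eu : ((2:ℕ):ℚ)^(2*(n-3)) = u^2 := by
    push_cast
    rw [hu, ← pow_mul]; congr 1; ring
  have hden : ∏ i ∈ range 3, ((((2:ℕ)):ℚ)^(i+1) - 1) = 21 := by
    norm_num [Finset.prod_range_succ]
  -- numerator bound
  have hnum0 : (0:ℚ) ≤ ∏ i ∈ range 3, (((2:ℕ):ℚ)^(n-i) - 1) := by
    apply Finset.prod_nonneg
    intro i _
    have : (1:ℚ) ≤ ((2:ℕ):ℚ)^(n-i) := one_le_pow₀ (by norm_num)
    linarith
  have hnumle : ∏ i ∈ range 3, (((2:ℕ):ℚ)^(n-i) - 1) ≤ 64 * u^3 := by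
    rw [Finset.prod_range_succ, Finset.prod_range_succ, Finset.prod_range_one]
    push_cast
    rw [e1, e2, e3]
    nlinarith [hu0, hu4]
  -- choose bound
  have h8N : (8:ℕ) ≤ 2^n := by
    calc (8:ℕ) = 2^3 := by norm_num
      _ ≤ 2^n := Nat.pow_le_pow_right (by norm_num) (by omega)
  have hC := chooseLB3 (2^n) 8 h8N
  have hCQ : ((25/4)*u)^8 ≤ (((2^n).choose 8 : ℕ) : ℚ) * 40320 := by
    have hfac8 : (8:ℕ).factorial = 40320 := by norm_num [Nat.factorial]
    rw [hfac8] at hC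
    have hC' : (((2^n - 8 + 1 : ℕ)) : ℚ)^8 ≤ (((2^n).choose 8 : ℕ) : ℚ) * 40320 := by
      exact_mod_cast hC
    have hcast : (((2^n - 8 + 1 : ℕ)) : ℚ) = (2:ℚ)^n - 7 := by
      push_cast [Nat.cast_sub h8N]
      ring
    rw [hcast] at hC'
    refine le_trans (pow_le_pow_left₀ (by positivity) ?_ 8) hC'
    -- (25/4) u ≤ 2^n - 7 = 8u - 7
    have he : (2:ℚ)^n = u * 8 := by rw [← e1]; norm_num
    rw [he]; linarith
  have hC0 : (0:ℚ) ≤ (((2^n).choose 8 : ℕ) : ℚ) := by positivity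
  -- assemble
  have hg : gaussBinomial 2 n 3 = (∏ i ∈ range 3, (((2:ℕ):ℚ)^(n-i) - 1)) / 21 := by
    rw [gaussBinomial]
    norm_num [Finset.prod_range_succ]
  rw [hg, div_pow, ← mul_div_assoc, eu, div_le_iff₀ (by norm_num : (0:ℚ) < 21^2)]
  have h83 : (2:ℕ)^3 = 8 := by norm_num
  rw [h83]
  have h2 := mul_le_mul_of_nonneg_left hCQ (show (0:ℚ) ≤ 2^28/25^8 by positivity)
  have s1 : (4096:ℚ)*u^8 = (2^28/25^8)*((25/4*u)^8) := by ring
  have s3 : (2^28/25^8)*((((2^n).choose 8 : ℕ) : ℚ)*40320)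
      = (40320 * 2^28 / (441 * 25^8)) * (((2^n).choose 8 : ℕ) : ℚ) * 21^2 := by ring
  have h3 : (4096:ℚ)*u^8 ≤ (40320 * 2^28 / (441 * 25^8)) * (((2^n).choose 8 : ℕ) : ℚ) * 21^2 := by
    rw [s1, ← s3]; exact h2
  have hmul : u^2 * (∏ i ∈ range 3, (((2:ℕ):ℚ)^(n-i) - 1))^2 ≤ u^2 * (64*u^3)^2 := by
    apply mul_le_mul_of_nonneg_left _ (by positivity)
    exact pow_le_pow_left₀ hnum0 hnumle 2
  refine le_trans ?_ h3
  calc u^2 * (∏ i ∈ range 3, (((2:ℕ):ℚ)^(n-i) - 1))^2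
      ≤ u^2 * (64*u^3)^2 := hmul
    _ = 4096*u^8 := by ring

lemma geom_tail (ρ : ℚ) (h0 : 0 < ρ) (h1 : ρ < 1) (a b : ℕ) :
    ∑ k ∈ Icc a b, ρ^k ≤ ρ^a / (1 - ρ) := by
  have hsub : Icc a b ⊆ Ico a (b+1) := by
    intro x hx; rw [mem_Icc] at hx; rw [mem_Ico]; omega
  have hgeom : ∀ N : ℕ, ∑ j ∈ range N, ρ^j ≤ 1/(1-ρ) := by
    intro N
    rw [geom_sum_eq (ne_of_lt h1)]
    have hd : (0:ℚ) < 1 - ρ := by linarith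
    have heq : (ρ^N - 1)/(ρ - 1) = (1 - ρ^N)/(1 - ρ) := by
      rw [div_eq_div_iff (by linarith) (by linarith)]; ring
    rw [heq, div_le_div_iff₀ hd hd]
    have : (0:ℚ) ≤ ρ^N := by positivity
    nlinarith
  calc ∑ k ∈ Icc a b, ρ^k ≤ ∑ k ∈ Ico a (b+1), ρ^k :=
        Finset.sum_le_sum_of_subset_of_nonneg hsub (fun i _ _ => by positivity)
    _ = ∑ j ∈ range (b+1-a), ρ^(a+j) := Finset.sum_Ico_eq_sum_range _ _ _
    _ = ρ^a * ∑ j ∈ range (b+1-a), ρ^j := by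
        rw [Finset.mul_sum]
        exact Finset.sum_congr rfl (fun j _ => pow_add ρ a j)
    _ ≤ ρ^a * (1/(1-ρ)) := mul_le_mul_of_nonneg_left (hgeom _) (by positivity)
    _ = ρ^a / (1-ρ) := by ring

lemma sum_Icc_split (f : ℕ → ℚ) (a b : ℕ) (h : a ≤ b) :
    ∑ k ∈ Icc a b, f k = f a + ∑ k ∈ Icc (a+1) b, f k := by
  have he : Icc a b = insert a (Icc (a+1) b) := by
    ext x; rw [mem_insert, mem_Icc, mem_Icc]; omega
  rw [he, Finset.sum_insert (by rw [mem_Icc]; omega)]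

lemma master (q m n : ℕ) (hq : 2 ≤ q) (hmn : m < n) (c : ℕ → ℚ)
    (hterm : ∀ k, m ≤ k → k ≤ n - 1 →
      (q:ℚ)^(2*(n-k)) * (gaussBinomial q n k)^2 ≤ c k * (((q^n).choose (q^k) : ℕ) : ℚ))
    (hsum : ∑ k ∈ Icc m (n-1), c k < 1) :
    ∑ k ∈ Finset.Icc m (n - 1),
        (q : ℚ) ^ (2 * (n - k)) * (gaussBinomial q n k) ^ 2 *
          (Nat.factorial (q ^ k) : ℚ) * (Nat.factorial (q ^ n - q ^ k) : ℚ)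
      < (Nat.factorial (q ^ n) : ℚ) := by
  have hNfac : (0:ℚ) < (Nat.factorial (q^n) : ℚ) := by exact_mod_cast Nat.factorial_pos _
  have hstep : ∀ k ∈ Icc m (n-1),
      (q : ℚ) ^ (2 * (n - k)) * (gaussBinomial q n k) ^ 2 *
          (Nat.factorial (q ^ k) : ℚ) * (Nat.factorial (q ^ n - q ^ k) : ℚ)
        ≤ c k * (Nat.factorial (q ^ n) : ℚ) := by
    intro k hk
    rw [mem_Icc] at hk
    have hkn : q ^ k ≤ q ^ n := Nat.pow_le_pow_right (by omega) (by omega)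
    have hfacid : ((q^n).choose (q^k)) * (q^k).factorial * (q^n - q^k).factorial
        = (q^n).factorial := Nat.choose_mul_factorial_mul_factorial hkn
    have hfacidQ : ((((q^n).choose (q^k) : ℕ)) : ℚ) * ((q^k).factorial : ℚ) * ((q^n - q^k).factorial : ℚ)
        = ((q^n).factorial : ℚ) := by exact_mod_cast hfacid
    have h1 := hterm k hk.1 hk.2
    calc (q : ℚ) ^ (2 * (n - k)) * (gaussBinomial q n k) ^ 2 *
          (Nat.factorial (q ^ k) : ℚ) * (Nat.factorial (q ^ n - q ^ k) : ℚ)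
        ≤ (c k * (((q^n).choose (q^k) : ℕ) : ℚ)) *
          (Nat.factorial (q ^ k) : ℚ) * (Nat.factorial (q ^ n - q ^ k) : ℚ) := by
          apply mul_le_mul_of_nonneg_right _ (by positivity)
          apply mul_le_mul_of_nonneg_right h1 (by positivity)
      _ = c k * (Nat.factorial (q ^ n) : ℚ) := by rw [← hfacidQ]; ring
  calc ∑ k ∈ Finset.Icc m (n - 1),
        (q : ℚ) ^ (2 * (n - k)) * (gaussBinomial q n k) ^ 2 *
          (Nat.factorial (q ^ k) : ℚ) * (Nat.factorial (q ^ n - q ^ k) : ℚ)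
      ≤ ∑ k ∈ Icc m (n-1), c k * (Nat.factorial (q ^ n) : ℚ) := Finset.sum_le_sum hstep
    _ = (∑ k ∈ Icc m (n-1), c k) * (Nat.factorial (q ^ n) : ℚ) := by rw [Finset.sum_mul]
    _ < 1 * (Nat.factorial (q ^ n) : ℚ) := by
        apply mul_lt_mul_of_pos_right hsum hNfac
    _ = (Nat.factorial (q ^ n) : ℚ) := one_mul _

-- nat pow facts
lemma pow3fact : ∀ k, 2 ≤ k → 6*k ≤ 3^k + 3 := by
  intro k hk
  induction k with
  | zero => omega
  | succ k ih =>
    rcases Nat.lt_or_ge k 2 with h | h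
    · interval_cases k <;> norm_num
    · have := ih (by omega)
      have h3 : 3^(k+1) = 3*3^k := by ring
      omega

lemma pow4fact : ∀ k, 1 ≤ k → 4*k ≤ 4^k := by
  intro k hk
  induction k with
  | zero => omega
  | succ k ih =>
    rcases Nat.eq_zero_or_pos k with h0 | h1
    · subst h0; norm_num
    · have := ih h1
      have h4 : 4^(k+1) = 4*4^k := by ring
      omega

lemma pow2fact : ∀ k, 4 ≤ k → 8*k ≤ 2^k + 16 := by
  intro k hk
  induction k with
  | zero => omega
  | succ k ih =>
    rcases Nat.lt_or_ge k 4 with h | h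
    · interval_cases k <;> norm_num
    · have := ih (by omega)
      have h2 : 2^(k+1) = 2*2^k := by ring
      have : 16 ≤ 2^k := by calc (16:ℕ) = 2^4 := by norm_num
                              _ ≤ 2^k := Nat.pow_le_pow_right (by norm_num) h
      omega


-- case q = 3
lemma case3 (n : ℕ) (hmn : 2 < n) :
    ∑ k ∈ Finset.Icc 2 (n - 1),
        ((3:ℕ) : ℚ) ^ (2 * (n - k)) * (gaussBinomial 3 n k) ^ 2 *
          (Nat.factorial (3 ^ k) : ℚ) * (Nat.factorial (3 ^ n - 3 ^ k) : ℚ)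
      < (Nat.factorial (3 ^ n) : ℚ) := by
  apply master 3 2 n (by norm_num) hmn (fun k => 972 * (1/81:ℚ)^k)
  · intro k hk2 hk1
    apply key_generic 3 n k (by norm_num) (by omega) (by omega) (1/2) _ (by norm_num)
    · exact den_lb_ge3' 3 (le_refl 3) k (1/2) (by norm_num) (by push_cast; norm_num)
    · have := pow3fact k hk2; omega
    · have h6 := pow3fact k hk2
      have hr : 2*k+2 ≤ 3^k := by omega
      have hE : 4*k - 5 ≤ (n-k)*(3^k - (2*k+2)) := by
        have h2 : 3^k - (2*k+2) ≤ (n-k)*(3^k - (2*k+2)) :=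
          Nat.le_mul_of_pos_left _ (by omega)
        omega
      have hp : ((3:ℕ):ℚ)^(4*k-5) ≤ ((3:ℕ):ℚ)^((n-k)*(3^k - (2*k+2))) :=
        pow_le_pow_right₀ (by push_cast; norm_num) hE
      have h1 : ((1:ℚ)/81)^k * ((3:ℕ):ℚ)^(4*k) = 1 := by
        have e81 : ((3:ℕ):ℚ)^(4*k) = 81^k := by
          push_cast
          rw [show (81:ℚ) = 3^4 by norm_num, ← pow_mul, mul_comm]
        rw [e81, ← mul_pow]; norm_num
      have h2 : ((3:ℕ):ℚ)^(4*k-5) * 243 = ((3:ℕ):ℚ)^(4*k) := by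
        rw [show (243:ℚ) = ((3:ℕ):ℚ)^5 by push_cast; norm_num, ← pow_add]
        congr 1; omega
      have e : ((1:ℚ)/81)^k * ((3:ℕ):ℚ)^(4*k-5) = 1/243 := by
        rw [eq_div_iff (show (243:ℚ) ≠ 0 by norm_num)]
        calc ((1:ℚ)/81)^k * ((3:ℕ):ℚ)^(4*k-5) * 243
            = ((1:ℚ)/81)^k * (((3:ℕ):ℚ)^(4*k-5) * 243) := by ring
          _ = ((1:ℚ)/81)^k * ((3:ℕ):ℚ)^(4*k) := by rw [h2]
          _ = 1 := h1
      have h3 : 972*((1:ℚ)/81)^k * (1/2)^2 * ((3:ℕ):ℚ)^(4*k-5) = 1 := by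
        calc 972*((1:ℚ)/81)^k * (1/2)^2 * ((3:ℕ):ℚ)^(4*k-5)
            = 243*(((1:ℚ)/81)^k * ((3:ℕ):ℚ)^(4*k-5)) := by ring
          _ = 243*(1/243) := by rw [e]
          _ = 1 := by norm_num
      calc (1:ℚ) = 972*((1:ℚ)/81)^k * (1/2)^2 * ((3:ℕ):ℚ)^(4*k-5) := h3.symm
        _ ≤ 972*((1:ℚ)/81)^k * (1/2)^2 * ((3:ℕ):ℚ)^((n-k)*(3^k - (2*k+2))) :=
            mul_le_mul_of_nonneg_left hp (by positivity)
  · calc ∑ k ∈ Icc 2 (n-1), 972 * (1/81:ℚ)^k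
        = 972 * ∑ k ∈ Icc 2 (n-1), (1/81:ℚ)^k := by rw [← Finset.mul_sum]
      _ ≤ 972 * ((1/81:ℚ)^2/(1-1/81)) := by
          apply mul_le_mul_of_nonneg_left
            (geom_tail (1/81) (by norm_num) (by norm_num) 2 (n-1)) (by norm_num)
      _ < 1 := by norm_num

-- case q ≥ 4
lemma case4 (q n : ℕ) (hq : 4 ≤ q) (hmn : 1 < n) :
    ∑ k ∈ Finset.Icc 1 (n - 1),
        (q : ℚ) ^ (2 * (n - k)) * (gaussBinomial q n k) ^ 2 *
          (Nat.factorial (q ^ k) : ℚ) * (Nat.factorial (q ^ n - q ^ k) : ℚ)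
      < (Nat.factorial (q ^ n) : ℚ) := by
  have hQ4 : (4:ℚ) ≤ (q:ℚ) := by exact_mod_cast hq
  apply master q 1 n (by omega) hmn (fun k => if k = 1 then (16/27:ℚ) else 36*(1/16:ℚ)^k)
  · intro k hk1 hkn1
    rcases Nat.eq_or_lt_of_le hk1 with heq | hlt
    · subst heq
      simp only [if_pos]
      exact key_q4 q n hq (by omega)
    · have hk2 : 2 ≤ k := hlt
      rw [if_neg (by omega)]
      apply key_generic q n k (by omega) (by omega) (by omega) (2/3) _ (by norm_num)
      · exact den_lb_ge3' q (by omega) k (2/3) (by norm_num) (by linarith)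
      · have h4 := pow4fact k (by omega)
        have h44 : 4^k ≤ q^k := Nat.pow_le_pow_left hq k
        omega
      · have h4 := pow4fact k (by omega)
        have h44 : 4^k ≤ q^k := Nat.pow_le_pow_left hq k
        have hr : 2*k+2 ≤ q^k := by omega
        have hE : 2*(k-1) ≤ (n-k)*(q^k - (2*k+2)) := by
          have h2 : q^k - (2*k+2) ≤ (n-k)*(q^k - (2*k+2)) :=
            Nat.le_mul_of_pos_left _ (by omega)
          omega
        have hp : (16:ℚ)^(k-1) ≤ (q:ℚ)^((n-k)*(q^k - (2*k+2))) := by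
          calc (16:ℚ)^(k-1) = 4^(2*(k-1)) := by
                rw [show (16:ℚ) = 4^2 by norm_num, ← pow_mul]
            _ ≤ (4:ℚ)^((n-k)*(q^k - (2*k+2))) := pow_le_pow_right₀ (by norm_num) hE
            _ ≤ (q:ℚ)^((n-k)*(q^k - (2*k+2))) := pow_le_pow_left₀ (by norm_num) hQ4 _
        have h1 : ((1:ℚ)/16)^k * 16^(k-1) * 16 = ((1:ℚ)/16)^k * 16^k := by
          rw [mul_assoc, ← pow_succ]
          congr 2
          omega
        have h2 : ((1:ℚ)/16)^k * (16:ℚ)^k = 1 := by rw [← mul_pow]; norm_num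
        have e : ((1:ℚ)/16)^k * (16:ℚ)^(k-1) = 1/16 := by
          rw [eq_div_iff (show (16:ℚ) ≠ 0 by norm_num)]
          exact h1.trans h2
        have h3 : 36*((1:ℚ)/16)^k * (2/3)^2 * (16:ℚ)^(k-1) = 1 := by
          calc 36*((1:ℚ)/16)^k * (2/3)^2 * (16:ℚ)^(k-1)
              = 16*(((1:ℚ)/16)^k * (16:ℚ)^(k-1)) := by ring
            _ = 16*(1/16) := by rw [e]
            _ = 1 := by norm_num
        calc (1:ℚ) = 36*((1:ℚ)/16)^k * (2/3)^2 * (16:ℚ)^(k-1) := h3.symm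
          _ ≤ 36*((1:ℚ)/16)^k * (2/3)^2 * (q:ℚ)^((n-k)*(q^k - (2*k+2))) :=
              mul_le_mul_of_nonneg_left hp (by positivity)
  · rw [sum_Icc_split _ 1 (n-1) (by omega)]
    have hrest : ∑ k ∈ Icc 2 (n-1), (if k = 1 then (16/27:ℚ) else 36*(1/16:ℚ)^k)
        = ∑ k ∈ Icc 2 (n-1), 36*(1/16:ℚ)^k := by
      apply Finset.sum_congr rfl
      intro k hk
      rw [mem_Icc] at hk
      rw [if_neg (by omega)]
    rw [if_pos rfl, hrest]
    have : ∑ k ∈ Icc 2 (n-1), 36*(1/16:ℚ)^k ≤ 36 * ((1/16:ℚ)^2/(1-1/16)) := by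
      rw [← Finset.mul_sum]
      apply mul_le_mul_of_nonneg_left
        (geom_tail (1/16) (by norm_num) (by norm_num) 2 (n-1)) (by norm_num)
    calc (16/27:ℚ) + ∑ k ∈ Icc 2 (n-1), 36*(1/16:ℚ)^k
        ≤ 16/27 + 36 * ((1/16:ℚ)^2/(1-1/16)) := by linarith
      _ < 1 := by norm_num

-- case q = 2, n ≥ 5
lemma case2big (n : ℕ) (hn : 5 ≤ n) :
    ∑ k ∈ Finset.Icc 3 (n - 1),
        ((2:ℕ) : ℚ) ^ (2 * (n - k)) * (gaussBinomial 2 n k) ^ 2 *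
          (Nat.factorial (2 ^ k) : ℚ) * (Nat.factorial (2 ^ n - 2 ^ k) : ℚ)
      < (Nat.factorial (2 ^ n) : ℚ) := by
  apply master 2 3 n (by norm_num) (by omega)
    (fun k => if k = 3 then (40320 * 2^28 / (441 * 25^8) : ℚ) else 4194304*(1/64:ℚ)^k)
  · intro k hk3 hkn1
    rcases Nat.eq_or_lt_of_le hk3 with heq | hlt
    · subst heq
      simp only [if_pos]
      exact key_q2 n hn
    · have hk4 : 4 ≤ k := hlt
      rw [if_neg (by omega)]
      apply key_generic 2 n k (by norm_num) (by omega) (by omega) (1/4) _ (by norm_num)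
      · have := den_lb_2' k
        push_cast
        exact this
      · have h8 := pow2fact k hk4
        omega
      · have h8 := pow2fact k hk4
        have hr : 2*k+2 ≤ 2^k := by omega
        have hE : 6*k - 18 ≤ (n-k)*(2^k - (2*k+2)) := by
          have h2 : 2^k - (2*k+2) ≤ (n-k)*(2^k - (2*k+2)) :=
            Nat.le_mul_of_pos_left _ (by omega)
          omega
        have hp : ((2:ℕ):ℚ)^(6*k-18) ≤ ((2:ℕ):ℚ)^((n-k)*(2^k - (2*k+2))) :=
          pow_le_pow_right₀ (by push_cast; norm_num) hE
        have h1 : ((1:ℚ)/64)^k * ((2:ℕ):ℚ)^(6*k-18) * 262144 = ((1:ℚ)/64)^k * (64:ℚ)^k := by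
          rw [mul_assoc]
          congr 1
          push_cast
          rw [show (262144:ℚ) = 2^18 by norm_num, ← pow_add,
            show (64:ℚ) = 2^6 by norm_num, ← pow_mul]
          congr 1
          omega
        have h2 : ((1:ℚ)/64)^k * (64:ℚ)^k = 1 := by rw [← mul_pow]; norm_num
        have e : ((1:ℚ)/64)^k * ((2:ℕ):ℚ)^(6*k-18) = 1/262144 := by
          rw [eq_div_iff (show (262144:ℚ) ≠ 0 by norm_num)]
          exact h1.trans h2
        have h3 : 4194304*((1:ℚ)/64)^k * (1/4)^2 * ((2:ℕ):ℚ)^(6*k-18) = 1 := by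
          calc 4194304*((1:ℚ)/64)^k * (1/4)^2 * ((2:ℕ):ℚ)^(6*k-18)
              = 262144*(((1:ℚ)/64)^k * ((2:ℕ):ℚ)^(6*k-18)) := by ring
            _ = 262144*(1/262144) := by rw [e]
            _ = 1 := by norm_num
        calc (1:ℚ) = 4194304*((1:ℚ)/64)^k * (1/4)^2 * ((2:ℕ):ℚ)^(6*k-18) := h3.symm
          _ ≤ 4194304*((1:ℚ)/64)^k * (1/4)^2 * ((2:ℕ):ℚ)^((n-k)*(2^k - (2*k+2))) :=
              mul_le_mul_of_nonneg_left hp (by positivity)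
  · rw [sum_Icc_split _ 3 (n-1) (by omega)]
    have hrest : ∑ k ∈ Icc 4 (n-1), (if k = 3 then (40320 * 2^28 / (441 * 25^8) : ℚ) else 4194304*(1/64:ℚ)^k)
        = ∑ k ∈ Icc 4 (n-1), 4194304*(1/64:ℚ)^k := by
      apply Finset.sum_congr rfl
      intro k hk
      rw [mem_Icc] at hk
      rw [if_neg (by omega)]
    rw [if_pos rfl, hrest]
    have hgeo : ∑ k ∈ Icc 4 (n-1), 4194304*(1/64:ℚ)^k ≤ 4194304 * ((1/64:ℚ)^4/(1-1/64)) := by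
      rw [← Finset.mul_sum]
      apply mul_le_mul_of_nonneg_left
        (geom_tail (1/64) (by norm_num) (by norm_num) 4 (n-1)) (by norm_num)
    have hnum : (40320 * 2^28 / (441 * 25^8) : ℚ) + 4194304 * ((1/64:ℚ)^4/(1-1/64)) < 1 := by
      norm_num
    linarith

-- case q = 2, n = 4, explicit
lemma case2small :
    ∑ k ∈ Finset.Icc 3 (4 - 1),
        ((2:ℕ) : ℚ) ^ (2 * (4 - k)) * (gaussBinomial 2 4 k) ^ 2 *
          (Nat.factorial (2 ^ k) : ℚ) * (Nat.factorial (2 ^ 4 - 2 ^ k) : ℚ)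
      < (Nat.factorial (2 ^ 4) : ℚ) := by
  have hI : Finset.Icc 3 (4-1) = {3} := rfl
  rw [hI, Finset.sum_singleton]
  have hg : gaussBinomial 2 4 3 = 15 := by
    rw [gaussBinomial]
    norm_num [Finset.prod_range_succ]
  rw [hg]
  norm_num [Nat.factorial]

/-- If `n > m` and either `q = 2, m = 3`, or `q = 3, m = 2`, or `q ≥ 4, m = 1`, then
`Σ_{k=m}^{n−1} q^{2(n−k)} [n choose k]_q² (q^k)! (q^n − q^k)! < (q^n)!`. -/
theorem sum_gaussBinomial_factorial_lt (q m n : ℕ) (hmn : m < n)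
    (h : (q = 2 ∧ m = 3) ∨ (q = 3 ∧ m = 2) ∨ (4 ≤ q ∧ m = 1)) :
    ∑ k ∈ Finset.Icc m (n - 1),
        (q : ℚ) ^ (2 * (n - k)) * (gaussBinomial q n k) ^ 2 *
          (Nat.factorial (q ^ k) : ℚ) * (Nat.factorial (q ^ n - q ^ k) : ℚ)
      < (Nat.factorial (q ^ n) : ℚ) := by
  rcases h with ⟨hq, hm⟩ | ⟨hq, hm⟩ | ⟨hq, hm⟩
  · subst hq; subst hm
    rcases Nat.lt_or_ge n 5 with hn | hn
    · have hn4 : n = 4 := by omega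
      subst hn4
      exact case2small
    · exact case2big n hn
  · subst hq; subst hm
    exact case3 n hmn
  · subst hm
    exact case4 q n hq hmn
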